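/- Let K be a symmetric positive semidefinite T × T real matrix with K_{ii} ≤ 1 for all i, and λ ≥ 1. Define σ_t = λ^{-1/2} (K_{tt} − k_t^T (K^{(t-1)} + λI)^{-1} k_t)^{1/2}, where K^{(t-1)} is the top-left (t−1)×(t−1) block of K and k_t ∈ ℝ^{t−1} is the vector (K_{1t},...,K_{(t-1)t}). Then Σ_{t=1}^T σ_t ≤ √(3 Γ T), where Γ = (1/2) ln det(I + λ^{-1} K). -/

import Mathlib

open Matrix

lemma aux_log_ineq {z : ℝ} (h0 : 0 ≤ z) (h1 : z ≤ 1) : z ≤ 3 / 2 * Real.log (1 + z) := by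
  have hcc : ConcaveOn ℝ (Set.Ioi 0) Real.log := strictConcaveOn_log_Ioi.concaveOn
  have hcon := hcc.2 (Set.mem_Ioi.mpr (one_pos (α := ℝ))) (Set.mem_Ioi.mpr (two_pos (α := ℝ)))
    (show (0:ℝ) ≤ 1 - z by linarith) h0 (show (1 - z) + z = 1 by ring)
  simp only [smul_eq_mul, Real.log_one, mul_zero, zero_add, mul_one] at hcon
  rw [show (1 : ℝ) - z + z * 2 = 1 + z by ring] at hcon
  have hl2 : (0.6931471803 : ℝ) < Real.log 2 := Real.log_two_gt_d9
  nlinarith [hcon, hl2]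

lemma aux_det_step {T n : ℕ} (hn1 : n + 1 ≤ T) (A : Matrix (Fin T) (Fin T) ℝ)
    (hInv : Invertible (A.submatrix (Fin.castLE (Nat.le_of_succ_le hn1))
      (Fin.castLE (Nat.le_of_succ_le hn1)))) :
    (A.submatrix (Fin.castLE hn1) (Fin.castLE hn1)).det =
      (A.submatrix (Fin.castLE (Nat.le_of_succ_le hn1))
          (Fin.castLE (Nat.le_of_succ_le hn1))).det *
        (A ⟨n, hn1⟩ ⟨n, hn1⟩ -
          (fun j => A ⟨n, hn1⟩ (Fin.castLE (Nat.le_of_succ_le hn1) j)) ⬝ᵥ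
            ((A.submatrix (Fin.castLE (Nat.le_of_succ_le hn1))
                (Fin.castLE (Nat.le_of_succ_le hn1)))⁻¹ *ᵥ
              fun i => A (Fin.castLE (Nat.le_of_succ_le hn1) i) ⟨n, hn1⟩)) := by
  set hn := Nat.le_of_succ_le hn1 with hhn
  set B := A.submatrix (Fin.castLE hn) (Fin.castLE hn) with hB
  set tN : Fin T := ⟨n, hn1⟩ with htN
  set Bc : Matrix (Fin n) (Fin 1) ℝ := Matrix.of (fun i _ => A (Fin.castLE hn i) tN) with hBc
  set Br : Matrix (Fin 1) (Fin n) ℝ := Matrix.of (fun _ j => A tN (Fin.castLE hn j)) with hBr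
  set D : Matrix (Fin 1) (Fin 1) ℝ := Matrix.of (fun _ _ => A tN tN) with hD
  have key : (fromBlocks B Bc Br D).submatrix
      (finSumFinEquiv (m := n) (n := 1)).symm (finSumFinEquiv (m := n) (n := 1)).symm =
      A.submatrix (Fin.castLE hn1) (Fin.castLE hn1) := by
    have h : ∀ i j : Fin n ⊕ Fin 1, fromBlocks B Bc Br D i j =
        A (Fin.castLE hn1 (finSumFinEquiv i)) (Fin.castLE hn1 (finSumFinEquiv j)) := by
      have e1 : ∀ i : Fin n, Fin.castLE hn1 (Fin.castAdd 1 i) = Fin.castLE hn i := by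
        intro i; apply Fin.ext; simp [Fin.castLE]
      have e2 : ∀ j : Fin 1, Fin.castLE hn1 (Fin.natAdd n j) = tN := by
        intro j; apply Fin.ext; simp [Fin.castLE, htN]
      rintro (i | i) (j | j) <;> simp [fromBlocks, e1, e2, hB, hBc, hBr, hD]
    ext i j
    simp [Matrix.submatrix_apply, h]
  have hdet := Matrix.det_submatrix_equiv_self
      (finSumFinEquiv (m := n) (n := 1)).symm (fromBlocks B Bc Br D)
  rw [key] at hdet
  rw [hdet, Matrix.det_fromBlocks₁₁]
  congr 1
  rw [Matrix.det_fin_one]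
  have hio : (⅟B : Matrix (Fin n) (Fin n) ℝ) = B⁻¹ := invOf_eq_nonsing_inv B
  rw [hio]
  simp only [Matrix.sub_apply, hD, Matrix.of_apply, Matrix.mul_apply, dotProduct,
    Matrix.mulVec, hBr, hBc]
  congr 1
  simp_rw [Finset.sum_mul, Finset.mul_sum]
  rw [Finset.sum_comm]
  exact Finset.sum_congr rfl fun i _ => Finset.sum_congr rfl fun j _ => by ring

lemma aux_smul_one_posDef {m : ℕ} {lam : ℝ} (hlam : 0 < lam) :
    (lam • (1 : Matrix (Fin m) (Fin m) ℝ)).PosDef := by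
  rw [Matrix.smul_one_eq_diagonal]
  exact Matrix.posDef_diagonal_iff.mpr fun _ => hlam

lemma aux_schur_nonneg {T m : ℕ} (K : Matrix (Fin T) (Fin T) ℝ) (hK : K.PosSemidef)
    {lam : ℝ} (hlam : 0 < lam) (t : Fin T) (f : Fin m → Fin T)
    (hB : ((Matrix.of fun i j : Fin m => K (f i) (f j)) +
        lam • (1 : Matrix (Fin m) (Fin m) ℝ)).PosDef) :
    0 ≤ K t t - (fun i : Fin m => K (f i) t) ⬝ᵥ
      (((Matrix.of fun i j : Fin m => K (f i) (f j)) +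
          lam • (1 : Matrix (Fin m) (Fin m) ℝ))⁻¹ *ᵥ fun i : Fin m => K (f i) t) := by
  set Bm := (Matrix.of fun i j : Fin m => K (f i) (f j)) +
      lam • (1 : Matrix (Fin m) (Fin m) ℝ) with hBm
  haveI : Invertible Bm := Bm.invertibleOfIsUnitDet hB.det_pos.ne'.isUnit
  have hsymm : ∀ a b, K a b = K b a := fun a b => by
    have := congrFun (congrFun hK.1 b) a
    simpa [Matrix.conjTranspose_apply] using this
  set Bc : Matrix (Fin m) (Fin 1) ℝ := Matrix.of (fun i _ => K (f i) t) with hBc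
  set D : Matrix (Fin 1) (Fin 1) ℝ := Matrix.of (fun _ _ => K t t) with hD
  set F : Fin m ⊕ Fin 1 → Fin T := Sum.elim f (fun _ => t) with hF
  have hdiagPSD : (lam • fromBlocks (1 : Matrix (Fin m) (Fin m) ℝ) 0 0
      (0 : Matrix (Fin 1) (Fin 1) ℝ)).PosSemidef := by
    have : lam • fromBlocks (1 : Matrix (Fin m) (Fin m) ℝ) 0 0
        (0 : Matrix (Fin 1) (Fin 1) ℝ) =
        Matrix.diagonal (Sum.elim (fun _ : Fin m => lam) (fun _ : Fin 1 => 0)) := by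
      ext i j
      rcases i with i | i <;> rcases j with j | j <;>
        simp [fromBlocks, Matrix.diagonal, Matrix.one_apply]
    rw [this]
    exact Matrix.PosSemidef.diagonal (by rintro (i | i) <;> simp [hlam.le])
  have hEq : K.submatrix F F + lam • fromBlocks (1 : Matrix (Fin m) (Fin m) ℝ) 0 0
      (0 : Matrix (Fin 1) (Fin 1) ℝ) = fromBlocks Bm Bc Bcᴴ D := by
    ext i j
    rcases i with i | i <;> rcases j with j | j <;>
      simp [fromBlocks, hBm, hBc, hD, hF, Matrix.conjTranspose_apply] <;>
      first
        | rfl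
        | (exact hsymm _ _)
  have hfb : (fromBlocks Bm Bc Bcᴴ D).PosSemidef := by
    rw [← hEq]
    exact (hK.submatrix F).add hdiagPSD
  have hres := (Matrix.PosDef.fromBlocks₁₁ Bc D hB).mp hfb
  have hval := hres.dotProduct_mulVec_nonneg (fun _ => (1 : ℝ))
  have hentry : (star (fun _ => (1:ℝ)) ⬝ᵥ (D - Bcᴴ * Bm⁻¹ * Bc) *ᵥ fun _ => (1:ℝ)) =
      K t t - (fun i : Fin m => K (f i) t) ⬝ᵥ (Bm⁻¹ *ᵥ fun i : Fin m => K (f i) t) := by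
    simp only [dotProduct, Matrix.mulVec, Fin.sum_univ_one, star_trivial, one_mul, mul_one,
      Matrix.sub_apply, hD, Matrix.of_apply, Matrix.mul_apply, hBc,
      Matrix.conjTranspose_apply, star_trivial]
    congr 1
    simp_rw [Finset.sum_mul, Finset.mul_sum]
    rw [Finset.sum_comm]
    exact Finset.sum_congr rfl fun i _ => Finset.sum_congr rfl fun j _ => by ring
  rw [hentry] at hval
  exact hval

lemma aux_submatrix_add_one {T n : ℕ} (hn : n ≤ T) (K : Matrix (Fin T) (Fin T) ℝ) (lam : ℝ) :
    (K + lam • (1 : Matrix (Fin T) (Fin T) ℝ)).submatrix (Fin.castLE hn) (Fin.castLE hn) =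
      (Matrix.of fun i j : Fin n => K (Fin.castLE hn i) (Fin.castLE hn j)) +
        lam • (1 : Matrix (Fin n) (Fin n) ℝ) := by
  ext i j
  simp [Matrix.submatrix_apply, Matrix.one_apply, Fin.castLE_inj]

/-- Bound on the sum of sequential posterior standard deviations: for a symmetric PSD
Gram matrix `K` with `K_{ii} ≤ 1` and `λ ≥ 1`, with
`σ_t = λ^{-1/2}(K_{tt} - k_t^T (K^{(t-1)} + λI)^{-1} k_t)^{1/2}`, one has
`Σ_{t=1}^T σ_t ≤ √(3 Γ T)` where `Γ = (1/2) ln det(I + λ^{-1} K)`. -/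
theorem stmt11 (T : ℕ) (hT : 0 < T)
    (K : Matrix (Fin T) (Fin T) ℝ)
    (hK : K.PosSemidef) (hKdiag : ∀ i, K i i ≤ 1)
    (lam : ℝ) (hlam : 1 ≤ lam)
    (σ : Fin T → ℝ)
    (hσ : ∀ t : Fin T, σ t =
      Real.sqrt lam⁻¹ *
        Real.sqrt (K t t -
          (fun i : Fin t.val => K (Fin.castLE t.isLt.le i) t) ⬝ᵥ
            (((Matrix.of fun i j : Fin t.val =>
                  K (Fin.castLE t.isLt.le i) (Fin.castLE t.isLt.le j)) +
                lam • (1 : Matrix (Fin t.val) (Fin t.val) ℝ))⁻¹ *ᵥ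
              fun i : Fin t.val => K (Fin.castLE t.isLt.le i) t))) :
    ∑ t : Fin T, σ t ≤
      Real.sqrt (3 * ((1 / 2) * Real.log (1 + lam⁻¹ • K).det) * T) := by
  have hlam0 : (0:ℝ) < lam := lt_of_lt_of_le one_pos hlam
  set A := K + lam • (1 : Matrix (Fin T) (Fin T) ℝ) with hA
  -- the sequential residuals
  set s : Fin T → ℝ := fun t =>
    K t t - (fun i : Fin t.val => K (Fin.castLE t.isLt.le i) t) ⬝ᵥ
      (((Matrix.of fun i j : Fin t.val =>
            K (Fin.castLE t.isLt.le i) (Fin.castLE t.isLt.le j)) +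
          lam • (1 : Matrix (Fin t.val) (Fin t.val) ℝ))⁻¹ *ᵥ
        fun i : Fin t.val => K (Fin.castLE t.isLt.le i) t) with hs
  -- positive definiteness of regularized submatrices
  have hBpd : ∀ {m : ℕ} (f : Fin m → Fin T),
      ((Matrix.of fun i j : Fin m => K (f i) (f j)) +
        lam • (1 : Matrix (Fin m) (Fin m) ℝ)).PosDef := by
    intro m f
    exact Matrix.PosDef.posSemidef_add (hK.submatrix f) (aux_smul_one_posDef hlam0)
  have hApd : ∀ {n : ℕ} (hn : n ≤ T),
      (A.submatrix (Fin.castLE hn) (Fin.castLE hn)).PosDef := by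
    intro n hn
    rw [hA, aux_submatrix_add_one hn K lam]
    exact hBpd (Fin.castLE hn)
  have hsymm : ∀ a b, K a b = K b a := fun a b => by
    have := congrFun (congrFun hK.1 b) a
    simpa [Matrix.conjTranspose_apply] using this
  -- determinant recursion
  have claim : ∀ n (hn : n ≤ T),
      (A.submatrix (Fin.castLE hn) (Fin.castLE hn)).det =
        ∏ i : Fin n, (lam + s (Fin.castLE hn i)) := by
    intro n
    induction n with
    | zero => intro hn; simp [Matrix.det_fin_zero]
    | succ n ih =>
      intro hn1
      have hn : n ≤ T := Nat.le_of_succ_le hn1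
      have hInvB : Invertible (A.submatrix (Fin.castLE hn) (Fin.castLE hn)) :=
        Matrix.invertibleOfIsUnitDet _ (hApd hn).det_pos.ne'.isUnit
      rw [aux_det_step hn1 A hInvB, ih hn, Fin.prod_univ_castSucc]
      have hcs : ∀ i : Fin n, Fin.castLE hn1 i.castSucc = Fin.castLE hn i :=
        fun i => Fin.ext (by simp)
      simp only [hcs]
      congr 1
      -- pivot equals lam + s ⟨n, hn1⟩
      set t : Fin T := ⟨n, hn1⟩ with ht
      have hAtt : A t t = K t t + lam := by
        simp [hA, Matrix.one_apply]
      have hrow : (fun j : Fin n => A t (Fin.castLE hn j)) =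
          fun j : Fin n => K (Fin.castLE hn j) t := by
        funext j
        have hne : t ≠ Fin.castLE hn j := by
          apply Fin.ne_of_val_ne
          simpa [ht] using j.isLt.ne'
        simp [hA, Matrix.one_apply, hne, hsymm t (Fin.castLE hn j)]
      have hcol : (fun i : Fin n => A (Fin.castLE hn i) t) =
          fun i : Fin n => K (Fin.castLE hn i) t := by
        funext i
        have hne : Fin.castLE hn i ≠ t := by
          apply Fin.ne_of_val_ne
          simpa [ht] using i.isLt.ne
        simp [hA, Matrix.one_apply, hne]
      have hsub : A.submatrix (Fin.castLE hn) (Fin.castLE hn) =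
          (Matrix.of fun i j : Fin n => K (Fin.castLE hn i) (Fin.castLE hn j)) +
            lam • (1 : Matrix (Fin n) (Fin n) ℝ) := by
        rw [hA]; exact aux_submatrix_add_one hn K lam
      have hcast : Fin.castLE hn1 (Fin.last n) = t := by
        apply Fin.ext; simp [ht, Fin.castLE]
      rw [hcast, hAtt, hrow, hcol, hsub]
      have hst : s t = K t t -
          (fun i : Fin n => K (Fin.castLE hn i) t) ⬝ᵥ
            (((Matrix.of fun i j : Fin n => K (Fin.castLE hn i) (Fin.castLE hn j)) +
                lam • (1 : Matrix (Fin n) (Fin n) ℝ))⁻¹ *ᵥ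
              fun i : Fin n => K (Fin.castLE hn i) t) := rfl
      rw [hst]
      ring
  -- determinant of A as a product
  have hid : A.submatrix (Fin.castLE (le_refl T)) (Fin.castLE (le_refl T)) = A := by
    ext i j; simp
  have detA : A.det = ∏ t : Fin T, (lam + s t) := by
    have := claim T (le_refl T)
    rw [hid] at this
    rw [this]
    exact Finset.prod_congr rfl fun i _ => by simp
  -- properties of s
  have hs_nonneg : ∀ t, 0 ≤ s t := by
    intro t
    exact aux_schur_nonneg K hK hlam0 t (Fin.castLE t.isLt.le) (hBpd (Fin.castLE t.isLt.le))
  have hs_le : ∀ t, s t ≤ 1 := by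
    intro t
    have hq : 0 ≤ (fun i : Fin t.val => K (Fin.castLE t.isLt.le i) t) ⬝ᵥ
        (((Matrix.of fun i j : Fin t.val =>
              K (Fin.castLE t.isLt.le i) (Fin.castLE t.isLt.le j)) +
            lam • (1 : Matrix (Fin t.val) (Fin t.val) ℝ))⁻¹ *ᵥ
          fun i : Fin t.val => K (Fin.castLE t.isLt.le i) t) := by
      have := ((hBpd (Fin.castLE t.isLt.le)).inv.posSemidef).dotProduct_mulVec_nonneg
        (fun i : Fin t.val => K (Fin.castLE t.isLt.le i) t)
      simpa using this
    have := hKdiag t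
    simp only [hs]
    linarith
  -- z t := lam⁻¹ * s t
  set z : Fin T → ℝ := fun t => lam⁻¹ * s t with hz
  have hz0 : ∀ t, 0 ≤ z t := fun t => mul_nonneg (inv_nonneg.mpr hlam0.le) (hs_nonneg t)
  have hz1 : ∀ t, z t ≤ 1 := fun t => by
    have h1 : lam⁻¹ ≤ 1 := inv_le_one_of_one_le₀ hlam
    calc lam⁻¹ * s t ≤ 1 * 1 :=
      mul_le_mul h1 (hs_le t) (hs_nonneg t) zero_le_one
    _ = 1 := by ring
  have hσz : ∀ t, σ t = Real.sqrt (z t) := by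
    intro t
    rw [hσ t, hz]
    rw [← Real.sqrt_mul (inv_nonneg.mpr hlam0.le)]
  have hσ0 : ∀ t, 0 ≤ σ t := fun t => by rw [hσz t]; exact Real.sqrt_nonneg _
  have hσsq : ∀ t, σ t ^ 2 = z t := fun t => by
    rw [hσz t, Real.sq_sqrt (hz0 t)]
  -- determinant identity
  have hmat : (1 : Matrix (Fin T) (Fin T) ℝ) + lam⁻¹ • K = lam⁻¹ • A := by
    rw [hA, smul_add, smul_smul, inv_mul_cancel₀ hlam0.ne', one_smul, add_comm]
  have hdet2 : (1 + lam⁻¹ • K).det = ∏ t : Fin T, (1 + z t) := by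
    rw [hmat, Matrix.det_smul, detA, Fintype.card_fin]
    rw [show (lam⁻¹ ^ T : ℝ) = ∏ _t : Fin T, lam⁻¹ by
      simp [Finset.prod_const], ← Finset.prod_mul_distrib]
    exact Finset.prod_congr rfl fun t _ => by
      rw [hz]
      field_simp
  have hlog : Real.log (1 + lam⁻¹ • K).det = ∑ t : Fin T, Real.log (1 + z t) := by
    rw [hdet2]
    exact Real.log_prod fun t _ => by
      have := hz0 t; positivity
  -- Cauchy–Schwarz
  have hCS : (∑ t : Fin T, σ t) ^ 2 ≤ (T : ℝ) * ∑ t : Fin T, z t := by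
    have h := Finset.sum_mul_sq_le_sq_mul_sq Finset.univ (fun _ : Fin T => (1:ℝ)) σ
    simp only [one_mul, one_pow] at h
    have h1 : ∑ _t : Fin T, (1:ℝ) = (T : ℝ) := by
      simp
    rw [h1] at h
    calc (∑ t : Fin T, σ t) ^ 2 ≤ (T : ℝ) * ∑ t : Fin T, σ t ^ 2 := h
      _ = (T : ℝ) * ∑ t : Fin T, z t := by
        congr 1
        exact Finset.sum_congr rfl fun t _ => hσsq t
  -- log bound
  have hzlog : ∑ t : Fin T, z t ≤ 3 / 2 * ∑ t : Fin T, Real.log (1 + z t) := by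
    rw [Finset.mul_sum]
    exact Finset.sum_le_sum fun t _ => aux_log_ineq (hz0 t) (hz1 t)
  -- conclude
  have hfinal : (∑ t : Fin T, σ t) ^ 2 ≤
      3 * ((1 / 2) * Real.log (1 + lam⁻¹ • K).det) * T := by
    rw [hlog]
    have h2 : (T : ℝ) * ∑ t : Fin T, z t ≤
        (T : ℝ) * (3 / 2 * ∑ t : Fin T, Real.log (1 + z t)) :=
      mul_le_mul_of_nonneg_left hzlog (Nat.cast_nonneg T)
    calc (∑ t : Fin T, σ t) ^ 2 ≤ (T : ℝ) * ∑ t : Fin T, z t := hCS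
      _ ≤ (T : ℝ) * (3 / 2 * ∑ t : Fin T, Real.log (1 + z t)) := h2
      _ = 3 * ((1 / 2) * ∑ t : Fin T, Real.log (1 + z t)) * T := by ring
  rw [Real.le_sqrt (Finset.sum_nonneg fun t _ => hσ0 t)
    (le_trans (sq_nonneg _) hfinal)]
  exact hfinal
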